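/- arXiv:1612.03815 — 3 statements merged into one kernel-verified Lean document; each statement's English description precedes it below -/
import Mathlib

section
/- Suppose q_u = −Σ α̂_i g̃_i ≠ 0 satisfies, for each i, ⟨q_u, −g̃_i⟩/(‖q_u‖₂ ‖g̃_i‖₂) ≥ ε_i/‖g̃_i‖₂, where g̃_i = g_i + ē_i with ‖ē_i‖₂ ≤ ε_i. Then q_u is a descent direction for the exact gradients, i.e. ⟨q_u, −g_i⟩ ≥ 0 for all i. -/
/-- If the inexact descent direction satisfies the angle-safety condition with respect to
the inexact gradients, then it is a (non-strict) descent direction for the exact gradients. -/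
theorem inexact_direction_is_exact_descent {n k : ℕ}
    (g gt e : Fin k → EuclideanSpace ℝ (Fin n)) (ε α : Fin k → ℝ)
    (hgt : ∀ i, gt i = g i + e i) (he : ∀ i, ‖e i‖ ≤ ε i) (hgt0 : ∀ i, gt i ≠ 0)
    (hα : ∀ i, 0 ≤ α i) (hsum : ∑ i, α i = 1)
    (q : EuclideanSpace ℝ (Fin n)) (hq : q = -∑ i, α i • gt i) (hq0 : q ≠ 0)
    (hangle : ∀ i, ε i / ‖gt i‖ ≤ (inner ℝ q (-gt i) : ℝ) / (‖q‖ * ‖gt i‖)) :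
    ∀ i, 0 ≤ (inner ℝ q (-g i) : ℝ) := by
  intro i
  have hqn : (0:ℝ) < ‖q‖ := norm_pos_iff.mpr hq0
  have hgn : (0:ℝ) < ‖gt i‖ := norm_pos_iff.mpr (hgt0 i)
  -- From the angle condition: ⟨q, -gt i⟩ ≥ ‖q‖ * ε i
  have h1 : ‖q‖ * ε i ≤ (inner ℝ q (-gt i) : ℝ) := by
    have := hangle i
    rw [div_le_div_iff₀ hgn (by positivity)] at this
    nlinarith
  -- Cauchy–Schwarz: ⟨q, e i⟩ ≥ -‖q‖ * ε i
  have h2 : -(‖q‖ * ε i) ≤ (inner ℝ q (e i) : ℝ) := by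
    have hcs := abs_real_inner_le_norm q (e i)
    have : ‖q‖ * ‖e i‖ ≤ ‖q‖ * ε i :=
      mul_le_mul_of_nonneg_left (he i) hqn.le
    have := neg_abs_le (inner ℝ q (e i) : ℝ)
    linarith [abs_real_inner_le_norm q (e i)]
  have hg : -g i = -gt i + e i := by rw [hgt i]; abel
  rw [hg, inner_add_right]
  linarith
end

section
/- Let α̂ minimize ‖Σ_{i=1}^k α_i v_i‖₂² over the standard simplex {α : α_i ≥ 0, Σ α_i = 1}, where v_1,…,v_k ∈ ℝⁿ, and let q = −Σ α̂_i v_i. Then ⟨−v_i, q⟩ ≥ 0 for every i = 1,…,k. -/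
/-- Schäffler–Schultz–Weinzierl key step: if `α` minimizes `‖∑ α_i v_i‖²` over the
probability simplex and `q = -∑ α_i v_i`, then `⟨-v_i, q⟩ ≥ 0` for every `i`. -/
theorem qop_minimizer_gives_descent {n k : ℕ}
    (v : Fin k → EuclideanSpace ℝ (Fin n)) (α : Fin k → ℝ)
    (hα : ∀ i, 0 ≤ α i) (hsum : ∑ i, α i = 1)
    (hmin : ∀ β : Fin k → ℝ, (∀ i, 0 ≤ β i) → ∑ i, β i = 1 →
      ‖∑ i, α i • v i‖ ^ 2 ≤ ‖∑ i, β i • v i‖ ^ 2)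
    (q : EuclideanSpace ℝ (Fin n)) (hq : q = -∑ i, α i • v i) :
    ∀ i, 0 ≤ (inner ℝ (-v i) q : ℝ) := by
  intro i
  set u : EuclideanSpace ℝ (Fin n) := ∑ j, α j • v j with hu
  -- key inequality: for all t ∈ (0,1], ‖u‖² ≤ ‖u + t•(v i - u)‖²
  have key : ∀ t : ℝ, 0 < t → t ≤ 1 →
      0 ≤ 2 * (inner ℝ u (v i - u) : ℝ) + t * ‖v i - u‖ ^ 2 := by
    intro t ht ht1
    set β : Fin k → ℝ := fun j => (1 - t) * α j + t * (if j = i then 1 else 0) with hβ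
    have hβ0 : ∀ j, 0 ≤ β j := by
      intro j
      by_cases hj : j = i <;>
        simp only [hβ, hj, ite_true, ite_false] <;>
        nlinarith [mul_nonneg (sub_nonneg.mpr ht1) (hα i),
          mul_nonneg (sub_nonneg.mpr ht1) (hα j), ht.le]
    have hβsum : ∑ j, β j = 1 := by
      simp only [hβ, Finset.sum_add_distrib, ← Finset.mul_sum, hsum,
        Finset.sum_ite_eq' Finset.univ i (fun _ => (1:ℝ))]
      simp
    have hβv : ∑ j, β j • v j = u + t • (v i - u) := by
      simp only [hβ, add_smul, Finset.sum_add_distrib, mul_smul, ← Finset.smul_sum]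
      have : (∑ j, (if j = i then (1:ℝ) else 0) • v j) = v i := by
        rw [Finset.sum_eq_single i]
        · simp
        · intro b _ hb; simp [hb]
        · simp
      rw [this, smul_sub, sub_smul, one_smul]
      rw [← hu]
      abel
    have h := hmin β hβ0 hβsum
    rw [hβv] at h
    have expand : ‖u + t • (v i - u)‖ ^ 2
        = ‖u‖ ^ 2 + 2 * (inner ℝ u (t • (v i - u)) : ℝ) + ‖t • (v i - u)‖ ^ 2 :=
      norm_add_sq_real u _
    rw [expand] at h
    have h2 : 0 ≤ 2 * (inner ℝ u (t • (v i - u)) : ℝ) + ‖t • (v i - u)‖ ^ 2 := by linarith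
    rw [real_inner_smul_right, norm_smul, mul_pow] at h2
    have habs : ‖t‖ ^ 2 = t * t := by
      rw [Real.norm_eq_abs, sq_abs]; ring
    rw [habs] at h2
    nlinarith [h2, ht]
  -- deduce 0 ≤ ⟨u, v i - u⟩
  set c : ℝ := (inner ℝ u (v i - u) : ℝ) with hc
  set d : ℝ := ‖v i - u‖ ^ 2 with hd
  have hd0 : 0 ≤ d := by positivity
  have hc0 : 0 ≤ c := by
    by_contra hcon
    push_neg at hcon
    set t : ℝ := min 1 ((-2 * c) / (d + 1)) with htdef
    have hdpos : (0:ℝ) < d + 1 := by linarith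
    have htpos : 0 < t := by
      apply lt_min one_pos
      apply div_pos (by linarith) hdpos
    have ht1 : t ≤ 1 := min_le_left _ _
    have ht2 : t ≤ (-2 * c) / (d + 1) := min_le_right _ _
    have := key t htpos ht1
    have h3 : t * (d + 1) ≤ -2 * c := (le_div_iff₀ hdpos).mp ht2
    nlinarith
  -- conclude
  have hexp : (inner ℝ (-v i) q : ℝ) = c + ‖u‖ ^ 2 := by
    rw [hq, hc, inner_neg_neg, inner_sub_right, real_inner_comm u (v i),
      real_inner_self_eq_norm_sq]
    ring
  rw [hexp]
  positivity
end

section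
/- If x* is a Pareto optimal point of the multiobjective problem min_{x∈ℝⁿ} (f_1(x),…,f_k(x)) with continuously differentiable f_i, then there exist nonnegative scalars α_1,…,α_k with Σ α_i = 1 and Σ α_i ∇f_i(x*) = 0. -/
open Filter InnerProductSpace

/-- If a real function has negative derivative at `0`, it eventually decreases to the right. -/
lemma eventually_lt_of_neg_deriv {φ : ℝ → ℝ} {c : ℝ} (h : HasDerivAt φ c 0) (hc : c < 0) :
    ∀ᶠ t in nhdsWithin (0 : ℝ) (Set.Ioi 0), φ t < φ 0 := by
  have hs : Tendsto (slope φ 0) (nhdsWithin 0 {(0:ℝ)}ᶜ) (nhds c) :=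
    hasDerivAt_iff_tendsto_slope.mp h
  have h2 : ∀ᶠ t in nhdsWithin (0:ℝ) {(0:ℝ)}ᶜ, slope φ 0 t < 0 :=
    hs (Iio_mem_nhds hc)
  have h3 : nhdsWithin (0:ℝ) (Set.Ioi 0) ≤ nhdsWithin (0:ℝ) {(0:ℝ)}ᶜ :=
    nhdsWithin_mono _ (fun t ht => ne_of_gt ht)
  filter_upwards [h3 h2, self_mem_nhdsWithin] with t ht ht0
  rw [slope_def_field, div_neg_iff] at ht
  rcases ht with ⟨h1, h2⟩ | ⟨h1, h2⟩
  · simp at ht0; linarith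
  · linarith

/-- KKT necessary condition for multiobjective optimization: if `x*` is Pareto optimal
for continuously differentiable objectives, then some convex combination of the gradients
vanishes at `x*`. -/
theorem multiobjective_kkt {n k : ℕ} (hk : 0 < k)
    (f : Fin k → EuclideanSpace ℝ (Fin n) → ℝ)
    (hf : ∀ i, ContDiff ℝ 1 (f i)) (xs : EuclideanSpace ℝ (Fin n))
    (hpareto : ¬∃ x, (∀ i, f i x ≤ f i xs) ∧ ∃ j, f j x < f j xs) :
    ∃ α : Fin k → ℝ, (∀ i, 0 ≤ α i) ∧ (∑ i, α i = 1) ∧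
      ∑ i, α i • gradient (f i) xs = 0 := by
  classical
  set g : Fin k → EuclideanSpace ℝ (Fin n) := fun i => gradient (f i) xs with hgdef
  by_cases h0 : (0 : EuclideanSpace ℝ (Fin n)) ∈ convexHull ℝ (Set.range g)
  · rw [convexHull_range_eq_exists_affineCombination] at h0
    obtain ⟨s, w, hw0, hw1, hcomb⟩ := h0
    refine ⟨fun i => if i ∈ s then w i else 0, ?_, ?_, ?_⟩
    · intro i
      dsimp only
      split
      · exact hw0 _ ‹_›
      · exact le_refl 0
    · rw [Finset.sum_ite_mem]
      simpa using hw1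
    · rw [Finset.affineCombination_eq_linear_combination s g w hw1] at hcomb
      calc ∑ i, (if i ∈ s then w i else 0) • g i
          = ∑ i, (if i ∈ s then w i • g i else 0) := by
            apply Finset.sum_congr rfl
            intro i _
            split <;> simp
        _ = ∑ i ∈ s, w i • g i := by rw [Finset.sum_ite_mem]; simp
        _ = 0 := hcomb
  · exfalso
    have hfin : (Set.range g).Finite := Set.finite_range g
    have hcl : IsClosed (convexHull ℝ (Set.range g)) := (hfin.isCompact_convexHull (𝕜 := ℝ)).isClosed
    obtain ⟨L, u, hLu, hub⟩ :=
      geometric_hahn_banach_point_closed (convex_convexHull ℝ _) hcl h0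
    have hu : 0 < u := by simpa using hLu
    have hpos : ∀ i, u < L (g i) := fun i =>
      hub _ (subset_convexHull ℝ _ ⟨i, rfl⟩)
    set d := (toDual ℝ (EuclideanSpace ℝ (Fin n))).symm L with hddef
    have hd : ∀ x : EuclideanSpace ℝ (Fin n), inner ℝ d x = L x := fun x => toDual_symm_apply
    -- direction of descent
    set v := -d with hvdef
    have hcurve : HasDerivAt (fun t : ℝ => xs + t • v) v 0 := by
      have h1 : HasDerivAt (fun t : ℝ => t • v) v 0 := by
        simpa using (hasDerivAt_id (0:ℝ)).smul_const v
      simpa using h1.const_add xs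
    have hdec : ∀ i, ∀ᶠ t in nhdsWithin (0:ℝ) (Set.Ioi 0),
        f i (xs + t • v) < f i xs := by
      intro i
      have hdiff : DifferentiableAt ℝ (f i) xs :=
        ((hf i).differentiable one_ne_zero).differentiableAt
      have hgrad : HasGradientAt (f i) (g i) xs := hdiff.hasGradientAt
      have hfd : HasFDerivAt (f i) (toDual ℝ (EuclideanSpace ℝ (Fin n)) (g i)) xs := hgrad.hasFDerivAt
      have hfd' : HasFDerivAt (f i) (toDual ℝ (EuclideanSpace ℝ (Fin n)) (g i)) ((fun t : ℝ => xs + t • v) 0) := by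
        simpa using hfd
      have hcomp : HasDerivAt (fun t : ℝ => f i (xs + t • v))
          (toDual ℝ (EuclideanSpace ℝ (Fin n)) (g i) v) 0 := hfd'.comp_hasDerivAt 0 hcurve
      have hval : (toDual ℝ (EuclideanSpace ℝ (Fin n)) (g i)) v = - (L (g i)) := by
        rw [toDual_apply_apply, hvdef, inner_neg_right, real_inner_comm, hd]
      have hneg : (toDual ℝ (EuclideanSpace ℝ (Fin n)) (g i)) v < 0 := by
        rw [hval]; linarith [hpos i]
      have := eventually_lt_of_neg_deriv hcomp hneg
      simpa using this
    have hall : ∀ᶠ t in nhdsWithin (0:ℝ) (Set.Ioi 0),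
        ∀ i, f i (xs + t • v) < f i xs := eventually_all.mpr hdec
    obtain ⟨t, ht⟩ := hall.exists
    exact hpareto ⟨xs + t • v, fun i => (ht i).le, ⟨0, hk⟩, ht _⟩
end
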